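/- The operators Q_κ^0 and Q_κ^1, for 0 ≤ κ ≤ 2n, form a Hermitian orthonormal family with respect to the Hilbert–Schmidt inner product: each Q_κ^a is Hermitian, and Tr(Q_κ^a Q_{κ′}^b) = δ_{κκ′} δ_{ab} for all 0 ≤ κ, κ′ ≤ 2n and a, b ∈ {0, 1}. -/

import Mathlib

open Matrix Complex
open scoped Kronecker

noncomputable section

abbrev QIdx (n : ℕ) := Fin n → Fin 2
abbrev NMat (n : ℕ) := Matrix (QIdx n) (QIdx n) ℂ
abbrev NMat2 (n : ℕ) := Matrix (QIdx n × QIdx n) (QIdx n × QIdx n) ℂ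

/-- The 2×2 Pauli X matrix. -/
def σX : Matrix (Fin 2) (Fin 2) ℂ := !![0, 1; 1, 0]
/-- The 2×2 Pauli Y matrix. -/
def σY : Matrix (Fin 2) (Fin 2) ℂ := !![0, -Complex.I; Complex.I, 0]
/-- The 2×2 Pauli Z matrix. -/
def σZ : Matrix (Fin 2) (Fin 2) ℂ := !![1, 0; 0, -1]

/-- Tensor (Kronecker) product of `n` one-qubit matrices, realized on index type `Fin n → Fin 2`. -/
def tensor {n : ℕ} (M : Fin n → Matrix (Fin 2) (Fin 2) ℂ) : NMat n :=
  Matrix.of fun f g => ∏ i, M i (f i) (g i)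

/-- The Jordan–Wigner Majorana operator `c_μ` (0-based index: `c_{2i} = Z^{⊗i} X I…`,
`c_{2i+1} = Z^{⊗i} Y I…`). -/
def majorana (n : ℕ) (μ : Fin (2 * n)) : NMat n :=
  tensor fun j =>
    if (j : ℕ) < (μ : ℕ) / 2 then σZ
    else if (j : ℕ) = (μ : ℕ) / 2 then (if (μ : ℕ) % 2 = 0 then σX else σY)
    else 1

/-- Ordered product `c^s` of the Majorana operators indexed by a subset `s`. -/
def cProd (n : ℕ) (s : Finset (Fin (2 * n))) : NMat n :=
  ((s.sort (· ≤ ·)).map (majorana n)).prod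

/-- The module `B_κ`: the complex span of products of `κ` distinct Majoranas. -/
def Bspace (n κ : ℕ) : Submodule ℂ (NMat n) :=
  Submodule.span ℂ {M | ∃ s : Finset (Fin (2 * n)), s.card = κ ∧ M = cProd n s}

/-- The Pauli string with `Z` on qubit `j` and identity elsewhere. -/
def pauliZ (n : ℕ) (j : Fin n) : NMat n := tensor fun k => if k = j then σZ else 1

/-- The Pauli string with `X` on qubits `j` and `j+1` and identity elsewhere. -/
def pauliXX (n : ℕ) (j : Fin n) : NMat n :=
  tensor fun k => if (k : ℕ) = (j : ℕ) ∨ (k : ℕ) = (j : ℕ) + 1 then σX else 1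

/-- The parity operator `P = Z^{⊗n}`. -/
def parity (n : ℕ) : NMat n := tensor fun _ => σZ


/-- Normalization constant `(d √C(2n,κ))⁻¹` with `d = 2^n`. -/
def Qnorm (n κ : ℕ) : ℂ := ((2 ^ n : ℂ) * ((Real.sqrt (Nat.choose (2 * n) κ) : ℝ) : ℂ))⁻¹

/-- The quadratic symmetry `Q_κ^0 = (d √C(2n,κ))⁻¹ Σ_{|s|=κ} c^s ⊗ c^s`. -/
def Q0 (n κ : ℕ) : NMat2 n :=
  Qnorm n κ • ∑ s ∈ Finset.powersetCard κ (Finset.univ : Finset (Fin (2 * n))),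
    (cProd n s) ⊗ₖ (cProd n s)

/-- The sum of the (1-based) elements of `s`, i.e. `π(s)`. -/
def piSum (n : ℕ) (s : Finset (Fin (2 * n))) : ℕ := ∑ μ ∈ s, ((μ : ℕ) + 1)

/-- The quadratic symmetry
`Q_κ^1 = (d √C(2n,κ))⁻¹ (−i)^n i^{κ mod 2} Σ_{|s|=κ} (−1)^{π(s)} c^s ⊗ c^{s̄}`. -/
def Q1 (n κ : ℕ) : NMat2 n :=
  (Qnorm n κ * (-Complex.I) ^ n * Complex.I ^ (κ % 2)) •
    ∑ s ∈ Finset.powersetCard κ (Finset.univ : Finset (Fin (2 * n))),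
      ((-1 : ℂ)) ^ (piSum n s) • ((cProd n s) ⊗ₖ (cProd n sᶜ))

/-- The matchgate circuit generators `{Z_j} ∪ {X_j X_{j+1}}`. -/
def matchgateGens (n : ℕ) : Set (NMat n) :=
  {M | ∃ j : Fin n, M = pauliZ n j} ∪
  {M | ∃ j : Fin n, (j : ℕ) + 1 < n ∧ M = pauliXX n j}

/-- The two-copy representation `H ⊗ I + I ⊗ H` of a generator `H`. -/
def bigH (n : ℕ) (H : NMat n) : NMat2 n :=
  H ⊗ₖ (1 : NMat n) + (1 : NMat n) ⊗ₖ H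


/-! ### Auxiliary lemmas -/

lemma tensor_mul {n : ℕ} (M N : Fin n → Matrix (Fin 2) (Fin 2) ℂ) :
    tensor M * tensor N = tensor (fun i => M i * N i) := by
  ext f g
  simp only [tensor, Matrix.mul_apply, Matrix.of_apply]
  simp only [← Finset.prod_mul_distrib]
  rw [Finset.prod_univ_sum]
  rw [Fintype.piFinset_univ]

lemma tensor_one {n : ℕ} : tensor (fun _ : Fin n => (1 : Matrix (Fin 2) (Fin 2) ℂ)) = 1 := by
  ext f g
  simp only [tensor, Matrix.of_apply, Matrix.one_apply]
  by_cases h : f = g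
  · simp [h]
  · obtain ⟨i, hi⟩ := Function.ne_iff.mp h
    rw [if_neg h]
    exact Finset.prod_eq_zero (Finset.mem_univ i) (by simp [Matrix.one_apply, hi])

lemma tensor_conjTranspose {n : ℕ} (M : Fin n → Matrix (Fin 2) (Fin 2) ℂ) :
    (tensor M)ᴴ = tensor (fun i => (M i)ᴴ) := by
  ext f g
  simp [tensor, Matrix.conjTranspose_apply, map_prod]


lemma σX_sq : σX * σX = 1 := by
  simp [σX, Matrix.mul_fin_two, Matrix.one_fin_two]
lemma σY_sq : σY * σY = 1 := by
  simp [σY, Matrix.mul_fin_two, Matrix.one_fin_two, Complex.I_mul_I]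
lemma σZ_sq : σZ * σZ = 1 := by
  simp [σZ, Matrix.mul_fin_two, Matrix.one_fin_two]
lemma σXY : σX * σY = -(σY * σX) := by
  simp [σX, σY, Matrix.mul_fin_two]
lemma σXZ : σX * σZ = -(σZ * σX) := by
  simp [σX, σZ, Matrix.mul_fin_two]
lemma σYZ : σY * σZ = -(σZ * σY) := by
  simp [σY, σZ, Matrix.mul_fin_two]
lemma σX_herm : σXᴴ = σX := by
  ext i j; fin_cases i <;> fin_cases j <;> simp [σX]
lemma σY_herm : σYᴴ = σY := by
  ext i j; fin_cases i <;> fin_cases j <;> simp [σY]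
lemma σZ_herm : σZᴴ = σZ := by
  ext i j; fin_cases i <;> fin_cases j <;> simp [σZ]

def mfac {n : ℕ} (μ : Fin (2 * n)) (j : Fin n) : Matrix (Fin 2) (Fin 2) ℂ :=
  if (j : ℕ) < (μ : ℕ) / 2 then σZ
  else if (j : ℕ) = (μ : ℕ) / 2 then (if (μ : ℕ) % 2 = 0 then σX else σY)
  else 1

lemma majorana_eq {n : ℕ} (μ : Fin (2 * n)) : majorana n μ = tensor (mfac μ) := rfl

lemma majorana_sq {n : ℕ} (μ : Fin (2 * n)) : majorana n μ * majorana n μ = 1 := by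
  rw [majorana_eq, tensor_mul]
  have : (fun j => mfac μ j * mfac μ j) = fun _ : Fin n => (1 : Matrix (Fin 2) (Fin 2) ℂ) := by
    funext j
    unfold mfac
    split_ifs <;> simp [σX_sq, σY_sq, σZ_sq]
  rw [this, tensor_one]

lemma mfac_herm {n : ℕ} (μ : Fin (2 * n)) (j : Fin n) : (mfac μ j)ᴴ = mfac μ j := by
  unfold mfac
  split_ifs <;> simp [σX_herm, σY_herm, σZ_herm]

lemma majorana_herm {n : ℕ} (μ : Fin (2 * n)) : (majorana n μ)ᴴ = majorana n μ := by
  rw [majorana_eq, tensor_conjTranspose]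
  simp only [mfac_herm]

lemma tensor_anticomm {n : ℕ} (A B : Fin n → Matrix (Fin 2) (Fin 2) ℂ) (j₀ : Fin n)
    (h1 : A j₀ * B j₀ = -(B j₀ * A j₀)) (h2 : ∀ j, j ≠ j₀ → A j * B j = B j * A j) :
    tensor A * tensor B = -(tensor B * tensor A) := by
  rw [tensor_mul, tensor_mul]
  ext f g
  simp only [tensor, Matrix.of_apply, Matrix.neg_apply]
  have hrest : ∏ j ∈ Finset.univ.erase j₀, (A j * B j) (f j) (g j)
      = ∏ j ∈ Finset.univ.erase j₀, (B j * A j) (f j) (g j) :=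
    Finset.prod_congr rfl fun j hj => by rw [h2 j (Finset.ne_of_mem_erase hj)]
  rw [← Finset.mul_prod_erase _ (fun j => (A j * B j) (f j) (g j)) (Finset.mem_univ j₀),
      ← Finset.mul_prod_erase _ (fun j => (B j * A j) (f j) (g j)) (Finset.mem_univ j₀)]
  simp only [hrest, h1, Matrix.neg_apply, neg_mul]

lemma majorana_anticomm_lt {n : ℕ} {μ ν : Fin (2 * n)} (h : (μ : ℕ) < (ν : ℕ)) :
    majorana n μ * majorana n ν = -(majorana n ν * majorana n μ) := by
  have hμlt : (μ : ℕ) < 2 * n := μ.isLt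
  have hn : (μ : ℕ) / 2 < n := by omega
  set j₀ : Fin n := ⟨(μ : ℕ) / 2, hn⟩ with hj₀
  have hle : (μ : ℕ) / 2 ≤ (ν : ℕ) / 2 := Nat.div_le_div_right h.le
  rw [majorana_eq, majorana_eq]
  apply tensor_anticomm _ _ j₀
  · have e1 : mfac μ j₀ = if (μ : ℕ) % 2 = 0 then σX else σY := by
      unfold mfac
      rw [if_neg (by simp [hj₀]), if_pos (by simp [hj₀])]
    rcases eq_or_lt_of_le hle with heq | hlt
    · have h0 : (μ : ℕ) % 2 = 0 := by omega
      have h1 : (ν : ℕ) % 2 = 1 := by omega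
      have e2 : mfac ν j₀ = σY := by
        unfold mfac
        rw [if_neg (by simp [hj₀]; omega), if_pos (by simp [hj₀]; omega), if_neg (by omega)]
      rw [e1, e2, if_pos h0]
      exact σXY
    · have e2 : mfac ν j₀ = σZ := by
        unfold mfac
        rw [if_pos (by simp [hj₀]; omega)]
      rw [e1, e2]
      split_ifs with h2
      · exact σXZ
      · exact σYZ
  · intro j hj
    have hj' : (j : ℕ) ≠ (μ : ℕ) / 2 := by
      intro hc; exact hj (Fin.ext hc)
    unfold mfac
    split_ifs with a1 a2 a3 a4 a5 a6 a7 <;> first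
      | rfl | omega | simp

lemma majorana_anticomm {n : ℕ} {μ ν : Fin (2 * n)} (h : μ ≠ ν) :
    majorana n μ * majorana n ν = -(majorana n ν * majorana n μ) := by
  rcases lt_or_gt_of_ne (fun hc : (μ : ℕ) = (ν : ℕ) => h (Fin.ext hc)) with hlt | hgt
  · exact majorana_anticomm_lt hlt
  · rw [majorana_anticomm_lt hgt, neg_neg]

-- real start
def gsign : ℕ → ℂ
  | 0 => 1
  | k + 1 => (-1) ^ k * gsign k

lemma gsign_sq (k : ℕ) : gsign k * gsign k = 1 := by
  induction k with
  | zero => simp [gsign]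
  | succ k ih =>
    show ((-1 : ℂ) ^ k * gsign k) * ((-1) ^ k * gsign k) = 1
    calc ((-1 : ℂ) ^ k * gsign k) * ((-1) ^ k * gsign k)
        = ((-1 : ℂ) ^ k * (-1) ^ k) * (gsign k * gsign k) := by ring
      _ = 1 := by rw [← pow_add, ih, mul_one, ← two_mul, pow_mul, neg_one_sq, one_pow]

lemma neg_one_pow_mod (a : ℕ) : (-1 : ℂ) ^ a = (-1) ^ (a % 2) := by
  conv_lhs => rw [← Nat.div_add_mod a 2]
  rw [pow_add, pow_mul, neg_one_sq, one_pow, one_mul]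

lemma neg_one_pow_congrC {a b : ℕ} (h : a % 2 = b % 2) : (-1 : ℂ) ^ a = (-1) ^ b := by
  rw [neg_one_pow_mod a, neg_one_pow_mod b, h]

lemma gsign_succ (k : ℕ) : gsign (k + 1) = (-1) ^ k * gsign k := rfl

lemma gsign_two_mul (n : ℕ) : gsign (2 * n) = (-1 : ℂ) ^ n := by
  induction n with
  | zero => simp [gsign]
  | succ n ih =>
    have : 2 * (n + 1) = (2 * n + 1) + 1 := by ring
    rw [this, gsign_succ, gsign_succ, ih]
    rw [show (-1 : ℂ) ^ (2*n+1) * ((-1) ^ (2*n) * (-1) ^ n) = (-1) ^ (2*n+1+2*n) * (-1)^n by ring]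
    rw [neg_one_pow_congrC (a := 2*n+1+2*n) (b := 1) (by omega)]
    rw [pow_one, pow_succ]
    ring

lemma gsign_mul_compl {n κ : ℕ} (h : κ ≤ 2 * n) :
    gsign κ * gsign (2 * n - κ) = (-1 : ℂ) ^ (n + κ) := by
  induction κ with
  | zero => simpa [gsign] using gsign_two_mul n
  | succ κ ih =>
    have hκ : κ ≤ 2 * n := by omega
    have h2 : 2 * n - κ = (2 * n - (κ + 1)) + 1 := by omega
    have h3 := gsign_succ (2 * n - (κ + 1))
    rw [← h2] at h3
    -- gsign (2n - κ) = (-1)^(2n - (κ+1)) * gsign (2n - (κ+1))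
    have h4 : gsign (2 * n - (κ + 1)) = (-1 : ℂ) ^ (2 * n - (κ + 1)) * gsign (2 * n - κ) := by
      rw [h3, ← mul_assoc, ← pow_add,
        neg_one_pow_congrC (a := (2*n-(κ+1)) + (2*n-(κ+1))) (b := 0) (by omega), pow_zero, one_mul]
    rw [gsign_succ, h4, show ((-1:ℂ)^κ * gsign κ) * ((-1:ℂ)^(2*n-(κ+1)) * gsign (2*n-κ))
      = ((-1:ℂ)^κ * (-1:ℂ)^(2*n-(κ+1))) * (gsign κ * gsign (2*n-κ)) by ring, ih hκ]
    rw [← pow_add, ← pow_add]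
    exact neg_one_pow_congrC (by omega)

lemma comm_move {n : ℕ} (μ : Fin (2 * n)) (l : List (Fin (2 * n))) :
    majorana n μ * (l.map (majorana n)).prod
      = (-1 : ℂ) ^ ((l.filter (· ≠ μ)).length) • ((l.map (majorana n)).prod * majorana n μ) := by
  induction l with
  | nil => simp
  | cons a l ih =>
    simp only [List.map_cons, List.prod_cons]
    by_cases ha : a = μ
    · rw [ha]
      have hfil : ((μ :: l).filter (· ≠ μ)) = l.filter (· ≠ μ) := by simp
      rw [hfil, ← mul_assoc, majorana_sq, one_mul, ih, smul_mul_assoc, smul_smul, ← pow_add,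
        neg_one_pow_congrC (b := 0) (by omega), pow_zero, one_smul, mul_assoc, majorana_sq,
        mul_one]
    · have hfil : ((a :: l).filter (· ≠ μ)) = a :: l.filter (· ≠ μ) := by simp [ha]
      rw [hfil, List.length_cons, ← mul_assoc,
        majorana_anticomm (fun h => ha h.symm), neg_mul, mul_assoc, ih, mul_smul_comm,
        ← mul_assoc, pow_succ, mul_comm ((-1:ℂ)^_) (-1), ← smul_smul, neg_one_smul]

lemma filter_ne_length {α : Type*} [DecidableEq α] (μ : α) (l : List α) (hl : l.Nodup) :
    (l.filter (· ≠ μ)).length = l.length - (if μ ∈ l then 1 else 0) := by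
  induction l with
  | nil => simp
  | cons a l ih =>
    have hnd := List.nodup_cons.mp hl
    by_cases ha : a = μ
    · subst ha
      have hfil : ((a :: l).filter (· ≠ a)) = l.filter (· ≠ a) := by simp
      have hmem : a ∉ l := hnd.1
      rw [hfil, ih hnd.2, if_neg hmem, if_pos List.mem_cons_self]
      simp
    · have hfil : ((a :: l).filter (· ≠ μ)) = a :: l.filter (· ≠ μ) := by simp [ha]
      rw [hfil, List.length_cons, ih hnd.2, List.length_cons]
      by_cases hm : μ ∈ l
      · have : 1 ≤ l.length := List.length_pos_iff.mpr (List.ne_nil_of_mem hm)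
        rw [if_pos hm, if_pos (List.mem_cons_of_mem a hm)]
        omega
      · have hmal : μ ∉ a :: l := by
          simp only [List.mem_cons, not_or]
          exact ⟨fun h => ha h.symm, hm⟩
        rw [if_neg hm, if_neg hmal]
        omega

lemma prod_sq {n : ℕ} (l : List (Fin (2 * n))) (hl : l.Nodup) :
    (l.map (majorana n)).prod * (l.map (majorana n)).prod = gsign l.length • 1 := by
  induction l with
  | nil => simp [gsign]
  | cons a l ih =>
    have hnd := List.nodup_cons.mp hl
    have hfl : (l.filter (· ≠ a)) = l := List.filter_eq_self.mpr
      (fun b hb => by simpa using fun h : b = a => hnd.1 (h ▸ hb))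
    have hcm := comm_move a l
    rw [hfl] at hcm
    simp only [List.map_cons, List.prod_cons, List.length_cons]
    calc majorana n a * (l.map (majorana n)).prod * (majorana n a * (l.map (majorana n)).prod)
        = (majorana n a * (l.map (majorana n)).prod) * (majorana n a * (l.map (majorana n)).prod) := rfl
      _ = ((-1:ℂ) ^ l.length • ((l.map (majorana n)).prod * majorana n a)) * (majorana n a * (l.map (majorana n)).prod) := by rw [← hcm]
      _ = (-1:ℂ) ^ l.length • ((l.map (majorana n)).prod * (majorana n a * majorana n a) * (l.map (majorana n)).prod) := by
            rw [smul_mul_assoc]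
            congr 1
            noncomm_ring
      _ = (-1:ℂ) ^ l.length • ((l.map (majorana n)).prod * (l.map (majorana n)).prod) := by
            rw [majorana_sq, mul_one]
      _ = gsign (l.length + 1) • 1 := by rw [ih hnd.2, smul_smul, gsign_succ]

lemma prod_dagger {n : ℕ} (l : List (Fin (2 * n))) (hl : l.Nodup) :
    ((l.map (majorana n)).prod)ᴴ = gsign l.length • (l.map (majorana n)).prod := by
  induction l with
  | nil => simp [gsign]
  | cons a l ih =>
    have hnd := List.nodup_cons.mp hl
    have hfl : (l.filter (· ≠ a)) = l := List.filter_eq_self.mpr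
      (fun b hb => by simpa using fun h : b = a => hnd.1 (h ▸ hb))
    have hcm := comm_move a l
    rw [hfl] at hcm
    simp only [List.map_cons, List.prod_cons, List.length_cons]
    rw [Matrix.conjTranspose_mul, majorana_herm, ih hnd.2, smul_mul_assoc]
    have hswap : (l.map (majorana n)).prod * majorana n a
        = (-1:ℂ) ^ l.length • (majorana n a * (l.map (majorana n)).prod) := by
      rw [hcm, smul_smul, ← pow_add, neg_one_pow_congrC (b := 0) (by omega), pow_zero, one_smul]
    rw [hswap, smul_smul, gsign_succ, mul_comm ((-1:ℂ)^l.length)]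

lemma cProd_sq {n : ℕ} (s : Finset (Fin (2 * n))) :
    cProd n s * cProd n s = gsign s.card • 1 := by
  have := prod_sq (s.sort (· ≤ ·)) (s.sort_nodup (· ≤ ·))
  rwa [Finset.length_sort] at this

lemma cProd_dagger {n : ℕ} (s : Finset (Fin (2 * n))) :
    (cProd n s)ᴴ = gsign s.card • cProd n s := by
  have := prod_dagger (s.sort (· ≤ ·)) (s.sort_nodup (· ≤ ·))
  rwa [Finset.length_sort] at this

lemma maj_cProd_comm {n : ℕ} (μ : Fin (2 * n)) (s : Finset (Fin (2 * n))) :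
    majorana n μ * cProd n s
      = (-1 : ℂ) ^ (s.card - (if μ ∈ s then 1 else 0)) • (cProd n s * majorana n μ) := by
  have h := comm_move μ (s.sort (· ≤ ·))
  rw [filter_ne_length μ _ (s.sort_nodup (· ≤ ·)), Finset.length_sort] at h
  simp only [Finset.mem_sort] at h
  exact h

lemma trace_cProd_self {n : ℕ} (s : Finset (Fin (2 * n))) :
    Matrix.trace (cProd n s * cProd n s) = gsign s.card * 2 ^ n := by
  rw [cProd_sq, Matrix.trace_smul, Matrix.trace_one, smul_eq_mul]
  congr 1
  simp [Fintype.card_fun]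

lemma exists_good_mu {n : ℕ} {s t : Finset (Fin (2 * n))} (hst : s ≠ t) :
    ∃ μ : Fin (2 * n),
      ((s.card - (if μ ∈ s then 1 else 0)) + (t.card - if μ ∈ t then 1 else 0)) % 2 = 1 := by
  by_cases hpar : (s.card + t.card) % 2 = 0
  · obtain ⟨μ, hμ⟩ : ∃ μ, ¬(μ ∈ s ↔ μ ∈ t) := by
      by_contra hc
      push_neg at hc
      exact hst (Finset.ext fun μ => hc μ)
    refine ⟨μ, ?_⟩
    rcases Classical.em (μ ∈ s) with hs | hs <;> rcases Classical.em (μ ∈ t) with ht | ht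
    · exact absurd (iff_of_true hs ht) hμ
    · have h1 : 1 ≤ s.card := Finset.card_pos.mpr ⟨μ, hs⟩
      rw [if_pos hs, if_neg ht]; omega
    · have h2 : 1 ≤ t.card := Finset.card_pos.mpr ⟨μ, ht⟩
      rw [if_neg hs, if_pos ht]; omega
    · exact absurd (iff_of_false hs ht) hμ
  · obtain ⟨μ, hμ⟩ : ∃ μ : Fin (2 * n), (μ ∈ s ↔ μ ∈ t) := by
      by_contra hc
      push_neg at hc
      have ht : t = sᶜ := Finset.ext fun μ => by
        have := hc μ; simp only [Finset.mem_compl]; tauto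
      have hcard : t.card = 2 * n - s.card := by
        rw [ht, Finset.card_compl, Fintype.card_fin]
      have hle : s.card ≤ 2 * n := by
        have := Finset.card_le_univ s
        simpa using this
      omega
    refine ⟨μ, ?_⟩
    rcases Classical.em (μ ∈ s) with hs | hs
    · have ht := hμ.mp hs
      have h1 : 1 ≤ s.card := Finset.card_pos.mpr ⟨μ, hs⟩
      have h2 : 1 ≤ t.card := Finset.card_pos.mpr ⟨μ, ht⟩
      rw [if_pos hs, if_pos ht]; omega
    · have ht : μ ∉ t := fun h => hs (hμ.mpr h)
      rw [if_neg hs, if_neg ht]; omega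

lemma trace_cProd_mul_ne {n : ℕ} {s t : Finset (Fin (2 * n))} (hst : s ≠ t) :
    Matrix.trace (cProd n s * cProd n t) = 0 := by
  obtain ⟨μ, hμ⟩ := exists_good_mu hst
  set A := cProd n s
  set B := cProd n t
  set m := majorana n μ
  have e1 := maj_cProd_comm μ s
  have e2 := maj_cProd_comm μ t
  set ks := s.card - (if μ ∈ s then 1 else 0) with hks
  set kt := t.card - (if μ ∈ t then 1 else 0) with hkt
  have key : m * (A * B) * m = -(A * B) := by
    calc m * (A * B) * m = (m * A) * (B * m) := by noncomm_ring
      _ = ((-1:ℂ) ^ ks • (A * m)) * (B * m) := by rw [e1]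
      _ = (-1:ℂ) ^ ks • (A * (m * B) * m) := by
          rw [smul_mul_assoc]; congr 1; noncomm_ring
      _ = (-1:ℂ) ^ ks • (A * ((-1:ℂ) ^ kt • (B * m)) * m) := by rw [e2]
      _ = ((-1:ℂ) ^ (ks + kt)) • (A * B * (m * m)) := by
          rw [mul_smul_comm, smul_mul_assoc, smul_smul, ← pow_add]; congr 1; noncomm_ring
      _ = ((-1:ℂ) ^ (ks + kt)) • (A * B) := by rw [majorana_sq, mul_one]
      _ = -(A * B) := by
          rw [Odd.neg_one_pow (Nat.odd_iff.mpr hμ), neg_one_smul]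
  have h2 : Matrix.trace (A * B) = Matrix.trace (m * (A * B) * m) := by
    rw [Matrix.trace_mul_cycle, ← mul_assoc, majorana_sq, one_mul]
  rw [key, Matrix.trace_neg] at h2
  have h3 : (2 : ℂ) * Matrix.trace (A * B) = 0 := by linear_combination h2
  exact (mul_eq_zero.mp h3).resolve_left two_ne_zero


lemma kron_conjT {n : ℕ} (A B : NMat n) : (A ⊗ₖ B)ᴴ = Aᴴ ⊗ₖ Bᴴ := by
  ext ⟨i, j⟩ ⟨k, l⟩
  simp [Matrix.conjTranspose_apply, Matrix.kroneckerMap_apply, _root_.map_mul]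

lemma trace_kron_mul {n : ℕ} (A B C D : NMat n) :
    Matrix.trace ((A ⊗ₖ B) * (C ⊗ₖ D)) = Matrix.trace (A * C) * Matrix.trace (B * D) := by
  rw [← Matrix.mul_kronecker_mul, Matrix.trace_kronecker]

lemma Qnorm_conj (n κ : ℕ) : star (Qnorm n κ) = Qnorm n κ := by
  simp [Qnorm, map_inv₀, _root_.map_mul, map_pow, Complex.conj_ofReal]

lemma mem_Pcard {n κ : ℕ} {s : Finset (Fin (2 * n))}
    (hs : s ∈ Finset.powersetCard κ (Finset.univ : Finset (Fin (2 * n)))) : s.card = κ :=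
  (Finset.mem_powersetCard.mp hs).2

lemma compl_card {n κ : ℕ} {s : Finset (Fin (2 * n))} (hs : s.card = κ) :
    sᶜ.card = 2 * n - κ := by
  rw [Finset.card_compl, Fintype.card_fin, hs]

lemma ne_compl {n : ℕ} (hn : 1 ≤ n) (s : Finset (Fin (2 * n))) : s ≠ sᶜ := by
  intro h
  set μ : Fin (2 * n) := ⟨0, by omega⟩
  by_cases hμ : μ ∈ s
  · have h2 : μ ∈ sᶜ := h ▸ hμ
    exact (Finset.mem_compl.mp h2) hμ
  · have h2 : μ ∉ sᶜ := h ▸ hμ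
    exact h2 (Finset.mem_compl.mpr hμ)

lemma Qnorm_mul_self {n κ : ℕ} (h : κ ≤ 2 * n) :
    Qnorm n κ * Qnorm n κ * (((2 * n).choose κ : ℂ) * (2 ^ n * 2 ^ n)) = 1 := by
  have hC : ((2 * n).choose κ : ℂ) ≠ 0 := by
    exact_mod_cast (Nat.choose_pos h).ne'
  have hr : ((Real.sqrt ((2 * n).choose κ) : ℝ) : ℂ) * ((Real.sqrt ((2 * n).choose κ) : ℝ) : ℂ)
      = ((2 * n).choose κ : ℂ) := by
    rw [← Complex.ofReal_mul, Real.mul_self_sqrt (by positivity)]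
    norm_cast
  have hr0 : ((Real.sqrt ((2 * n).choose κ) : ℝ) : ℂ) ≠ 0 := by
    intro h0
    rw [h0, mul_zero] at hr
    exact hC hr.symm
  have h2 : (2 : ℂ) ^ n ≠ 0 := pow_ne_zero _ two_ne_zero
  rw [Qnorm]
  field_simp
  linear_combination (-1 : ℂ) * hr

lemma zeta_sq (n κ : ℕ) :
    ((-I : ℂ) ^ n * I ^ (κ % 2)) * ((-I) ^ n * I ^ (κ % 2)) * (-1 : ℂ) ^ (n + κ) = 1 := by
  rw [show ((-I : ℂ) ^ n * I ^ (κ % 2)) * ((-I) ^ n * I ^ (κ % 2)) * (-1 : ℂ) ^ (n + κ)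
      = ((-I) * (-I)) ^ n * ((I * I) ^ (κ % 2) * (-1 : ℂ) ^ (n + κ)) by
    rw [mul_pow, mul_pow]; ring]
  rw [show ((-I : ℂ) * (-I)) = -1 by rw [neg_mul_neg, Complex.I_mul_I],
    Complex.I_mul_I, ← pow_add, ← pow_add,
    neg_one_pow_congrC (b := 0) (by omega), pow_zero]

lemma zeta_conj (n κ : ℕ) :
    star (Qnorm n κ * (-I) ^ n * I ^ (κ % 2)) * (-1 : ℂ) ^ (n + κ)
      = Qnorm n κ * (-I) ^ n * I ^ (κ % 2) := by
  have hs : star (Qnorm n κ * (-I) ^ n * I ^ (κ % 2))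
      = Qnorm n κ * I ^ n * (-I) ^ (κ % 2) := by
    rw [star_mul', star_mul', Qnorm_conj, star_pow, star_pow, Complex.star_def,
      Complex.conj_I, show (starRingEnd ℂ) (-I) = I by rw [map_neg, Complex.conj_I, neg_neg]]
  have h1 : (I : ℂ) ^ n * (-1 : ℂ) ^ n = (-I) ^ n := by
    rw [← mul_pow, mul_neg_one]
  have h2 : (-I : ℂ) ^ (κ % 2) * (-1 : ℂ) ^ κ = I ^ (κ % 2) := by
    rw [neg_one_pow_mod κ, ← mul_pow, mul_neg_one, neg_neg]
  rw [hs, pow_add]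
  calc Qnorm n κ * I ^ n * (-I) ^ (κ % 2) * ((-1 : ℂ) ^ n * (-1 : ℂ) ^ κ)
      = Qnorm n κ * ((I : ℂ) ^ n * (-1 : ℂ) ^ n) * ((-I : ℂ) ^ (κ % 2) * (-1 : ℂ) ^ κ) := by
        ring
    _ = Qnorm n κ * (-I) ^ n * I ^ (κ % 2) := by rw [h1, h2]

lemma star_neg_one_pow (m : ℕ) : star ((-1 : ℂ) ^ m) = (-1 : ℂ) ^ m := by
  rw [star_pow]
  norm_num

lemma Q0_herm (n κ : ℕ) : (Q0 n κ).IsHermitian := by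
  show (Q0 n κ)ᴴ = Q0 n κ
  unfold Q0
  rw [Matrix.conjTranspose_smul, Qnorm_conj, Matrix.conjTranspose_sum]
  congr 1
  refine Finset.sum_congr rfl fun s hs => ?_
  rw [kron_conjT, cProd_dagger, Matrix.smul_kronecker, Matrix.kronecker_smul, smul_smul,
    gsign_sq, one_smul]

lemma Q1_herm (n : ℕ) {κ : ℕ} (hκ : κ ≤ 2 * n) : (Q1 n κ).IsHermitian := by
  show (Q1 n κ)ᴴ = Q1 n κ
  unfold Q1
  rw [Matrix.conjTranspose_smul, Matrix.conjTranspose_sum]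
  have hterm : ∀ s ∈ Finset.powersetCard κ (Finset.univ : Finset (Fin (2 * n))),
      (((-1 : ℂ)) ^ (piSum n s) • ((cProd n s) ⊗ₖ (cProd n sᶜ)))ᴴ
        = (-1 : ℂ) ^ (n + κ) • (((-1 : ℂ)) ^ (piSum n s) • ((cProd n s) ⊗ₖ (cProd n sᶜ))) := by
    intro s hs
    rw [Matrix.conjTranspose_smul, star_neg_one_pow, kron_conjT, cProd_dagger, cProd_dagger,
      Matrix.smul_kronecker, Matrix.kronecker_smul, smul_smul, smul_smul, smul_smul,
      mem_Pcard hs, compl_card (mem_Pcard hs)]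
    congr 1
    linear_combination ((-1 : ℂ) ^ piSum n s) * gsign_mul_compl hκ
  rw [Finset.sum_congr rfl hterm, ← Finset.smul_sum, smul_smul, zeta_conj n κ]

lemma trace_Q_gen {n : ℕ} (a b : ℂ) (P Q : Finset (Finset (Fin (2 * n))))
    (F G : Finset (Fin (2 * n)) → NMat2 n) :
    Matrix.trace ((a • ∑ s ∈ P, F s) * (b • ∑ t ∈ Q, G t))
      = ∑ s ∈ P, ∑ t ∈ Q, a * b * Matrix.trace (F s * G t) := by
  rw [smul_mul_assoc, mul_smul_comm, smul_smul, Finset.sum_mul_sum, Matrix.trace_smul,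
    Matrix.trace_sum, smul_eq_mul, Finset.mul_sum]
  refine Finset.sum_congr rfl fun s _ => ?_
  rw [Matrix.trace_sum, Finset.mul_sum]

lemma trace_Q0_Q0 {n κ κ' : ℕ} (hκ : κ ≤ 2 * n) (hκ' : κ' ≤ 2 * n) :
    Matrix.trace (Q0 n κ * Q0 n κ') = if κ = κ' then 1 else 0 := by
  unfold Q0
  rw [trace_Q_gen]
  by_cases h : κ = κ'
  · subst h
    rw [if_pos rfl]
    have hdiag : ∀ s ∈ Finset.powersetCard κ (Finset.univ : Finset (Fin (2 * n))),
        (∑ t ∈ Finset.powersetCard κ (Finset.univ : Finset (Fin (2 * n))),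
          Qnorm n κ * Qnorm n κ
            * Matrix.trace ((cProd n s ⊗ₖ cProd n s) * (cProd n t ⊗ₖ cProd n t)))
          = Qnorm n κ * Qnorm n κ * ((gsign κ * 2 ^ n) * (gsign κ * 2 ^ n)) := by
      intro s hs
      rw [Finset.sum_eq_single_of_mem s hs (fun t ht hts => by
        rw [trace_kron_mul, trace_cProd_mul_ne (fun he => hts he.symm), zero_mul, mul_zero])]
      rw [trace_kron_mul, trace_cProd_self, mem_Pcard hs]
    rw [Finset.sum_congr rfl hdiag, Finset.sum_const, Finset.card_powersetCard,
      Finset.card_univ, Fintype.card_fin, nsmul_eq_mul]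
    linear_combination (((2 * n).choose κ : ℂ) * Qnorm n κ * Qnorm n κ * 2 ^ n * 2 ^ n)
        * gsign_sq κ + Qnorm_mul_self hκ
  · rw [if_neg h]
    refine Finset.sum_eq_zero fun s hs => Finset.sum_eq_zero fun t ht => ?_
    have hst : s ≠ t := fun he => h (by rw [← mem_Pcard hs, he, mem_Pcard ht])
    rw [trace_kron_mul, trace_cProd_mul_ne hst, zero_mul, mul_zero]

lemma trace_Q1_Q1 {n κ κ' : ℕ} (hκ : κ ≤ 2 * n) (hκ' : κ' ≤ 2 * n) :
    Matrix.trace (Q1 n κ * Q1 n κ') = if κ = κ' then 1 else 0 := by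
  unfold Q1
  rw [trace_Q_gen]
  by_cases h : κ = κ'
  · subst h
    rw [if_pos rfl]
    set a := Qnorm n κ * (-I) ^ n * I ^ (κ % 2) with ha
    have hdiag : ∀ s ∈ Finset.powersetCard κ (Finset.univ : Finset (Fin (2 * n))),
        (∑ t ∈ Finset.powersetCard κ (Finset.univ : Finset (Fin (2 * n))),
          a * a * Matrix.trace (((-1 : ℂ) ^ piSum n s • (cProd n s ⊗ₖ cProd n sᶜ))
            * ((-1 : ℂ) ^ piSum n t • (cProd n t ⊗ₖ cProd n tᶜ))))
          = a * a * ((gsign κ * 2 ^ n) * (gsign (2 * n - κ) * 2 ^ n)) := by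
      intro s hs
      rw [Finset.sum_eq_single_of_mem s hs (fun t ht hts => by
        rw [smul_mul_assoc, mul_smul_comm, smul_smul, Matrix.trace_smul, trace_kron_mul,
          trace_cProd_mul_ne (fun he => hts he.symm), zero_mul, smul_zero, mul_zero])]
      rw [smul_mul_assoc, mul_smul_comm, smul_smul, Matrix.trace_smul, trace_kron_mul,
        trace_cProd_self, trace_cProd_self, mem_Pcard hs, compl_card (mem_Pcard hs),
        ← pow_add, neg_one_pow_congrC (b := 0) (by omega), pow_zero, one_smul]
    rw [Finset.sum_congr rfl hdiag, Finset.sum_const, Finset.card_powersetCard,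
      Finset.card_univ, Fintype.card_fin, nsmul_eq_mul, ha]
    linear_combination
      (Qnorm n κ * Qnorm n κ * ((2 * n).choose κ : ℂ) * 2 ^ n * 2 ^ n
          * (((-I : ℂ) ^ n * I ^ (κ % 2)) * ((-I : ℂ) ^ n * I ^ (κ % 2))))
        * gsign_mul_compl hκ
      + (Qnorm n κ * Qnorm n κ * ((2 * n).choose κ : ℂ) * 2 ^ n * 2 ^ n) * zeta_sq n κ
      + Qnorm_mul_self hκ
  · rw [if_neg h]
    refine Finset.sum_eq_zero fun s hs => Finset.sum_eq_zero fun t ht => ?_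
    have hst : s ≠ t := fun he => h (by rw [← mem_Pcard hs, he, mem_Pcard ht])
    rw [smul_mul_assoc, mul_smul_comm, smul_smul, Matrix.trace_smul, trace_kron_mul,
      trace_cProd_mul_ne hst, zero_mul, smul_zero, mul_zero]

lemma trace_Q0_Q1 {n κ κ' : ℕ} (hn : 1 ≤ n) :
    Matrix.trace (Q0 n κ * Q1 n κ') = 0 := by
  unfold Q0 Q1
  rw [trace_Q_gen]
  refine Finset.sum_eq_zero fun s hs => Finset.sum_eq_zero fun t ht => ?_
  rcases eq_or_ne s t with he | he
  · subst he
    rw [mul_smul_comm, Matrix.trace_smul, trace_kron_mul,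
      trace_cProd_mul_ne (ne_compl hn s), mul_zero, smul_zero, mul_zero]
  · rw [mul_smul_comm, Matrix.trace_smul, trace_kron_mul,
      trace_cProd_mul_ne he, zero_mul, smul_zero, mul_zero]

lemma trace_Q1_Q0 {n κ κ' : ℕ} (hn : 1 ≤ n) :
    Matrix.trace (Q1 n κ * Q0 n κ') = 0 := by
  unfold Q0 Q1
  rw [trace_Q_gen]
  refine Finset.sum_eq_zero fun s hs => Finset.sum_eq_zero fun t ht => ?_
  rcases eq_or_ne s t with he | he
  · subst he
    rw [smul_mul_assoc, Matrix.trace_smul, trace_kron_mul,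
      trace_cProd_mul_ne (Ne.symm (ne_compl hn s)), mul_zero, smul_zero, mul_zero]
  · rw [smul_mul_assoc, Matrix.trace_smul, trace_kron_mul,
      trace_cProd_mul_ne he, zero_mul, smul_zero, mul_zero]


/-- The operators `Q_κ^0, Q_κ^1`, `0 ≤ κ ≤ 2n`, form a Hermitian orthonormal family for the
Hilbert–Schmidt inner product. -/
theorem Q_hermitian_orthonormal (n : ℕ) (hn : 1 ≤ n) :
    (∀ κ : ℕ, κ ≤ 2 * n → (Q0 n κ).IsHermitian ∧ (Q1 n κ).IsHermitian)
    ∧ (∀ κ κ' : ℕ, κ ≤ 2 * n → κ' ≤ 2 * n →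
        (Matrix.trace (Q0 n κ * Q0 n κ') = if κ = κ' then 1 else 0)
        ∧ (Matrix.trace (Q1 n κ * Q1 n κ') = if κ = κ' then 1 else 0)
        ∧ Matrix.trace (Q0 n κ * Q1 n κ') = 0
        ∧ Matrix.trace (Q1 n κ * Q0 n κ') = 0) := by
  refine ⟨fun κ hκ => ⟨Q0_herm n κ, Q1_herm n hκ⟩, fun κ κ' hκ hκ' => ?_⟩
  exact ⟨trace_Q0_Q0 hκ hκ', trace_Q1_Q1 hκ hκ', trace_Q0_Q1 hn, trace_Q1_Q0 hn⟩

end
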